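/- (Regret bound with fixed learning rate.) Let Θ ⊆ ℝ^d be a closed convex set containing 0, λ ≥ 0, G ≥ 0, and η > 0. For t = 1, …, T let L_t : ℝ^d → ℝ be convex and G-Lipschitz on Θ. Let R = R₁ + ⋯ + R_J with each R_j convex, lower semicontinuous, proper, satisfying R ≥ 0, R(0) = 0, R_{j'}(θ) ≥ R_{j'}(prox_{ηλR_j}(θ)) for all θ and j' < j, and R(θ) ≥ R(Π_Θ(θ)) for all θ. Consider iterates θ₁ = 0 and, for each t, θ_{t+1} obtained from θ_t by the gradient step with a subgradient of L_t, the J proximal steps with step size ηλ, and projection onto Θ. Then, with θ* = argmin_{θ ∈ Θ} Σ_{t=1}^T ( λR(θ) + L_t(θ) ), the regret Reg_T = Σ_{t=1}^T ( λR(θ_t) + L_t(θ_t) ) − Σ_{t=1}^T ( λR(θ*) + L_t(θ*) ) satisfies Reg_T ≤ (ηT/2)G² + ‖θ*‖²/(2η). -/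

import Mathlib

open RealInnerProductSpace

noncomputable section

/-- Extended-real-valued convexity of `φ : E → ℝ ∪ {+∞}`. -/
def ERealConvexOn {E : Type*} [NormedAddCommGroup E] [InnerProductSpace ℝ E]
    (φ : E → EReal) : Prop :=
  ∀ x y : E, ∀ t : ℝ, 0 ≤ t → t ≤ 1 →
    φ (t • x + (1 - t) • y) ≤ (t : EReal) * φ x + ((1 - t : ℝ) : EReal) * φ y

/-- `φ` is proper: it never takes the value `−∞` (functions into `ℝ ∪ {+∞}`
never do) and is finite somewhere. -/
def ERealProper {E : Type*} (φ : E → EReal) : Prop :=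
  (∃ x, φ x ≠ ⊤) ∧ ∀ x, φ x ≠ ⊥

/-- `x` is the proximity point `prox_φ(y)`, i.e. a minimizer of
`z ↦ (1/2)‖z − y‖² + φ(z)`. -/
def IsProxPt {E : Type*} [NormedAddCommGroup E] (φ : E → EReal) (y x : E) : Prop :=
  ∀ z : E, (((1/2) * ‖x - y‖^2 : ℝ) : EReal) + φ x ≤ (((1/2) * ‖z - y‖^2 : ℝ) : EReal) + φ z

/-- The Moreau envelope `M_φ(y) = inf_x (1/2)‖x − y‖² + φ(x)`. -/
def moreauEnvelope {E : Type*} [NormedAddCommGroup E] (φ : E → EReal) (y : E) : EReal :=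
  ⨅ x : E, (((1/2) * ‖x - y‖^2 : ℝ) : EReal) + φ x

/-- The Fenchel conjugate `φ⋆(y) = sup_x ⟨y, x⟩ − φ(x)`. -/
def fenchelConjugate {E : Type*} [NormedAddCommGroup E] [InnerProductSpace ℝ E]
    (φ : E → EReal) (y : E) : EReal :=
  ⨆ x : E, ((⟪y, x⟫ : ℝ) : EReal) - φ x

/-- `g` is a subgradient of the convex function `L` at `θ₀`. -/
def IsSubgradientAt {E : Type*} [NormedAddCommGroup E] [InnerProductSpace ℝ E]
    (L : E → ℝ) (g θ₀ : E) : Prop :=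
  ∀ θ : E, (⟪g, θ - θ₀⟫ : ℝ) ≤ L θ - L θ₀

/-- `x = prox_{c·φ}(y)`: `x` minimizes `z ↦ (1/2)‖z − y‖² + c·φ(z)`. -/
def IsProxPtOf {E : Type*} [NormedAddCommGroup E] (c : ℝ) (φ : E → EReal) (y x : E) : Prop :=
  ∀ z : E, (((1/2) * ‖x - y‖^2 : ℝ) : EReal) + (c : EReal) * φ x
    ≤ (((1/2) * ‖z - y‖^2 : ℝ) : EReal) + (c : EReal) * φ z

/-- `x = Π_Θ(y)`: `x` is the Euclidean projection of `y` onto `Θ`. -/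
def IsProjPt {E : Type*} [NormedAddCommGroup E] (Θ : Set E) (y x : E) : Prop :=
  x ∈ Θ ∧ ∀ z ∈ Θ, ‖x - y‖ ≤ ‖z - y‖

lemma quad_aux (a b : ℝ) (hb : 0 ≤ b) (h : ∀ s : ℝ, 0 < s → s ≤ 1 → 0 ≤ a * s + b * s^2) :
    0 ≤ a := by
  by_contra hneg
  push_neg at hneg
  have hs1 : (0:ℝ) < min 1 (-a / (b+1)) :=
    lt_min one_pos (div_pos (by linarith) (by linarith))
  have hs2 : min 1 (-a / (b+1)) ≤ 1 := min_le_left _ _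
  have h0 := h _ hs1 hs2
  set s := min 1 (-a / (b+1)) with hs
  have h3 : s ≤ -a / (b+1) := min_le_right _ _
  have h4 : s * (b+1) ≤ -a := by
    rw [le_div_iff₀ (by linarith)] at h3; linarith
  nlinarith [mul_le_mul_of_nonneg_left h4 hs1.le, mul_pos hs1 hs1]

lemma key_pt {E : Type*} [NormedAddCommGroup E] [InnerProductSpace ℝ E]
    (x y z : E) (cc : ℝ)
    (h : ∀ s : ℝ, 0 < s → s ≤ 1 →
      (1/2) * ‖x - y‖^2 ≤ (1/2) * ‖x + s • (z - x) - y‖^2 + s * cc) :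
    ‖x - z‖^2 ≤ ‖y - z‖^2 + 2 * cc := by
  have key : 0 ≤ ⟪x - y, z - x⟫ + cc := by
    apply quad_aux _ (‖z-x‖^2/2) (by positivity)
    intro s hs hs1
    have hexp : ‖x + s • (z - x) - y‖^2
        = ‖x - y‖^2 + 2 * (s * ⟪x - y, z - x⟫) + s^2 * ‖z - x‖^2 := by
      have : x + s • (z - x) - y = (x - y) + s • (z - x) := by abel
      rw [this, @norm_add_sq_real, real_inner_smul_right, norm_smul]
      simp only [mul_pow, Real.norm_eq_abs, sq_abs]
      try ring
    have := h s hs hs1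
    rw [hexp] at this
    nlinarith
  have hid : ‖y - z‖^2 = ‖y - x‖^2 + 2 * ⟪x - y, z - x⟫ + ‖x - z‖^2 := by
    have : y - z = (y - x) + (x - z) := by abel
    rw [this, @norm_add_sq_real]
    have : ⟪y - x, x - z⟫ = ⟪x - y, z - x⟫ := by
      rw [show x - y = -(y-x) by abel, show z - x = -(x-z) by abel, inner_neg_neg]
    rw [this]
    try ring
  nlinarith [sq_nonneg ‖y - x‖]

lemma er_sum_ne_bot {ι : Type*} (s : Finset ι) (f : ι → EReal)
    (h : ∀ i ∈ s, f i ≠ ⊥) : ∑ i ∈ s, f i ≠ ⊥ := by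
  classical
  induction s using Finset.induction_on with
  | empty => simp
  | @insert a t hat ih =>
    rw [Finset.sum_insert hat]
    rw [Ne, EReal.add_eq_bot_iff]
    push_neg
    exact ⟨h a (Finset.mem_insert_self a t), ih fun i hi => h i (Finset.mem_insert_of_mem hi)⟩

lemma er_sum_eq_top {ι : Type*} (s : Finset ι) (f : ι → EReal)
    (hb : ∀ i ∈ s, f i ≠ ⊥) {i : ι} (hi : i ∈ s) (ht : f i = ⊤) : ∑ j ∈ s, f j = ⊤ := by
  classical
  rw [← Finset.add_sum_erase s f hi, ht]
  exact EReal.top_add_of_ne_bot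
    (er_sum_ne_bot _ _ fun j hj => hb j (Finset.mem_of_mem_erase hj))

lemma er_term_ne_top {ι : Type*} (s : Finset ι) (f : ι → EReal)
    (hb : ∀ i ∈ s, f i ≠ ⊥) (ht : ∑ i ∈ s, f i ≠ ⊤) : ∀ i ∈ s, f i ≠ ⊤ := by
  classical
  intro i hi hcon
  exact ht (er_sum_eq_top s f hb hi hcon)

lemma er_coe_sum {ι : Type*} (s : Finset ι) (f : ι → ℝ) :
    ((∑ i ∈ s, f i : ℝ) : EReal) = ∑ i ∈ s, (f i : EReal) := by
  classical
  induction s using Finset.induction_on with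
  | empty => simp
  | @insert a t hat ih =>
    rw [Finset.sum_insert hat, Finset.sum_insert hat, EReal.coe_add, ih]

lemma er_toReal_nonneg (x : EReal) (h : 0 ≤ x) : 0 ≤ x.toReal := by
  rcases eq_or_ne x ⊤ with h1|h1
  · simp [h1]
  · exact (EReal.toReal_le_toReal h (by simp) h1).trans_eq' (by simp)

lemma fin_chain (J : ℕ) (f : Fin (J+1) → ℝ) (d : Fin J → ℝ)
    (h : ∀ j : Fin J, f j.succ ≤ f j.castSucc + d j) :
    f (Fin.last J) ≤ f 0 + ∑ j : Fin J, d j := by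
  classical
  set D : ℕ → ℝ := fun n => if hn : n < J then d ⟨n, hn⟩ else 0 with hD
  have key : ∀ k, ∀ hk : k ≤ J, f ⟨k, Nat.lt_succ_of_le hk⟩ ≤ f 0 + ∑ i ∈ Finset.range k, D i := by
    intro k
    induction k with
    | zero => intro _; simp
    | succ m ih =>
      intro hk
      have hmJ : m < J := hk
      have h1 := h ⟨m, hmJ⟩
      have h2 := ih (le_of_lt hmJ)
      rw [Finset.sum_range_succ]
      have hsucc : (⟨m, hmJ⟩ : Fin J).succ = ⟨m+1, Nat.lt_succ_of_le hk⟩ := rfl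
      have hcast : (⟨m, hmJ⟩ : Fin J).castSucc = ⟨m, Nat.lt_succ_of_le (le_of_lt hmJ)⟩ := rfl
      rw [hsucc, hcast] at h1
      have : D m = d ⟨m, hmJ⟩ := by simp [hD, hmJ]
      rw [this]
      linarith
  have h1 := key J le_rfl
  have h2 : (⟨J, Nat.lt_succ_of_le le_rfl⟩ : Fin (J+1)) = Fin.last J := rfl
  rw [h2] at h1
  have h3 : ∑ i ∈ Finset.range J, D i = ∑ j : Fin J, d j := by
    rw [← Fin.sum_univ_eq_sum_range]
    apply Finset.sum_congr rfl
    intro j _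
    simp [hD, j.isLt]
  rw [h3] at h1
  exact h1

lemma grad_expand {E : Type*} [NormedAddCommGroup E] [InnerProductSpace ℝ E]
    (u v : E) (η : ℝ) : ‖u - η • v‖^2 = ‖u‖^2 - 2*(η*⟪u, v⟫) + η^2*‖v‖^2 := by
  rw [@norm_sub_sq_real, real_inner_smul_right, norm_smul]
  simp only [mul_pow, Real.norm_eq_abs, sq_abs]
  try ring

lemma sum_step (T : ℕ) (hT : 0 < T) (η G2 : ℝ) (hη : 0 < η)
    (a ℓ b A : ℕ → ℝ) (ha1 : a 1 = 0)
    (hann : ∀ t, 1 ≤ t → t ≤ T → 0 ≤ a (t+1))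
    (hAnn : ∀ t, 0 ≤ A t)
    (hstep : ∀ t, 1 ≤ t → t ≤ T → 2*η*(a (t+1) + ℓ t - b t) ≤ η^2*G2 + A t - A (t+1)) :
    ∑ t ∈ Finset.Icc 1 T, (a t + ℓ t)
      ≤ (∑ t ∈ Finset.Icc 1 T, b t) + (η*T/2*G2 + A 1/(2*η)) := by
  have hIcc : ∀ (f : ℕ → ℝ), ∑ t ∈ Finset.Icc 1 T, f t = ∑ i ∈ Finset.range T, f (1+i) := by
    intro f
    rw [← Finset.Ico_add_one_right_eq_Icc, Finset.sum_Ico_eq_sum_range]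
    congr 1
  rw [hIcc, hIcc]
  have h2η : (0:ℝ) < 2*η := by linarith
  rw [← mul_le_mul_iff_right₀ h2η]
  have step2 : ∀ i ∈ Finset.range T,
      2*η*(a (1+i) + ℓ (1+i)) ≤ (2*η*b (1+i) + η^2*G2)
        + ((A (1+i) - A (1+(i+1))) + (2*η*a (1+i) - 2*η*a (1+(i+1)))) := by
    intro i hi
    have hiT : 1+i ≤ T := by have := Finset.mem_range.mp hi; omega
    have h := hstep (1+i) (by omega) hiT
    have : 1+i+1 = 1+(i+1) := by omega
    rw [this] at h
    nlinarith
  calc 2*η * ∑ i ∈ Finset.range T, (a (1+i) + ℓ (1+i))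
      = ∑ i ∈ Finset.range T, 2*η*(a (1+i) + ℓ (1+i)) := Finset.mul_sum _ _ _
    _ ≤ ∑ i ∈ Finset.range T, ((2*η*b (1+i) + η^2*G2)
        + ((A (1+i) - A (1+(i+1))) + (2*η*a (1+i) - 2*η*a (1+(i+1))))) :=
        Finset.sum_le_sum step2
    _ = (∑ i ∈ Finset.range T, 2*η*b (1+i) + T*(η^2*G2))
        + ((A 1 - A (1+T)) + (2*η*a 1 - 2*η*a (1+T))) := by
        rw [Finset.sum_add_distrib, Finset.sum_add_distrib, Finset.sum_add_distrib,
          Finset.sum_const, Finset.card_range,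
          Finset.sum_range_sub' (fun i => A (1+i)) T,
          Finset.sum_range_sub' (fun i => 2*η*a (1+i)) T]
        push_cast
        ring
    _ ≤ 2*η*((∑ i ∈ Finset.range T, b (1+i)) + (η*T/2*G2 + A 1/(2*η))) := by
        rw [ha1]
        have h1 : 0 ≤ A (1+T) := hAnn _
        have h2 : 0 ≤ a (1+T) := by
          have := hann T (by omega) le_rfl
          have e : T+1 = 1+T := by omega
          rwa [e] at this
        rw [← Finset.mul_sum]
        have hA1 : 2*η*(A 1/(2*η)) = A 1 := by field_simp
        nlinarith [hAnn 1]

lemma prox_ne_top {E : Type*} [NormedAddCommGroup E]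
    (c : ℝ) (hc : 0 < c) (φ : E → EReal) (hprop : ERealProper φ)
    (y x : E) (hp : IsProxPtOf c φ y x) : φ x ≠ ⊤ := by
  obtain ⟨x₀, hx0⟩ := hprop.1
  intro hcon
  have h1 := hp x₀
  rw [hcon] at h1
  have hcE : (0:EReal) < (c:EReal) := by exact_mod_cast hc
  rw [EReal.mul_top_of_pos hcE] at h1
  rw [EReal.add_top_of_ne_bot (EReal.coe_ne_bot _)] at h1
  have hx0b := hprop.2 x₀
  rw [← EReal.coe_toReal hx0 hx0b, ← EReal.coe_mul, ← EReal.coe_add] at h1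
  exact (EReal.coe_lt_top _).not_ge h1

lemma prox_contract {E : Type*} [NormedAddCommGroup E] [InnerProductSpace ℝ E]
    (c : ℝ) (hc : 0 ≤ c) (φ : E → EReal)
    (hconv : ERealConvexOn φ) (hprop : ERealProper φ) (y x z : E)
    (hp : IsProxPtOf c φ y x) (hz : c = 0 ∨ φ z ≠ ⊤) :
    ‖x - z‖^2 ≤ ‖y - z‖^2 + 2 * (c * ((φ z).toReal - (φ x).toReal)) := by
  rcases hc.eq_or_lt with hc0 | hcpos
  · subst hc0
    have h0 : (((0:ℝ)):EReal) = (0:EReal) := rfl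
    apply key_pt
    intro s hs hs1
    have h1 := hp (x + s • (z - x))
    rw [h0, zero_mul, zero_mul, add_zero, add_zero] at h1
    rw [EReal.coe_le_coe_iff] at h1
    nlinarith
  · have hzt : φ z ≠ ⊤ := by
      rcases hz with h | h
      · exact absurd h (by linarith)
      · exact h
    have hxt : φ x ≠ ⊤ := prox_ne_top c hcpos φ hprop y x hp
    have hxb : φ x ≠ ⊥ := hprop.2 x
    have hzb : φ z ≠ ⊥ := hprop.2 z
    set rx := (φ x).toReal with hrx
    set rz := (φ z).toReal with hrz
    have hxE : φ x = ((rx:ℝ):EReal) := (EReal.coe_toReal hxt hxb).symm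
    have hzE : φ z = ((rz:ℝ):EReal) := (EReal.coe_toReal hzt hzb).symm
    apply key_pt
    intro s hs hs1
    set w := x + s • (z - x) with hw
    have hweq : w = s • z + (1 - s) • x := by
      rw [hw, smul_sub, sub_smul, one_smul]; abel
    have hwconv : φ w ≤ ((s * rz + (1-s) * rx : ℝ) : EReal) := by
      rw [hweq]
      calc φ (s • z + (1-s) • x) ≤ (s:EReal) * φ z + ((1-s:ℝ):EReal) * φ x :=
            hconv z x s hs.le hs1
        _ = ((s * rz + (1-s) * rx : ℝ) : EReal) := by
            rw [hxE, hzE, ← EReal.coe_mul, ← EReal.coe_mul, ← EReal.coe_add]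
    have hwb : φ w ≠ ⊥ := hprop.2 w
    have hwt : φ w ≠ ⊤ := (lt_of_le_of_lt hwconv (EReal.coe_lt_top _)).ne
    set v := (φ w).toReal with hv
    have hwE : φ w = ((v:ℝ):EReal) := (EReal.coe_toReal hwt hwb).symm
    have hvle : v ≤ s * rz + (1-s) * rx := by
      rw [hwE] at hwconv; exact_mod_cast hwconv
    have h1 := hp w
    rw [hxE, hwE, ← EReal.coe_mul, ← EReal.coe_mul, ← EReal.coe_add, ← EReal.coe_add,
      EReal.coe_le_coe_iff] at h1
    nlinarith [mul_le_mul_of_nonneg_left hvle hc]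

lemma proj_contract {E : Type*} [NormedAddCommGroup E] [InnerProductSpace ℝ E]
    (Θ : Set E) (hΘconv : Convex ℝ Θ) (y x z : E)
    (hpj : IsProjPt Θ y x) (hz : z ∈ Θ) :
    ‖x - z‖^2 ≤ ‖y - z‖^2 := by
  have h := key_pt x y z 0 ?_
  · linarith
  · intro s hs hs1
    have hweq : x + s • (z - x) = s • z + (1 - s) • x := by
      rw [smul_sub, sub_smul, one_smul]; abel
    have hw : x + s • (z - x) ∈ Θ := by
      rw [hweq]
      exact hΘconv hz hpj.1 hs.le (by linarith) (by ring)
    have h2 := hpj.2 _ hw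
    have := pow_le_pow_left₀ (norm_nonneg _) h2 2
    nlinarith

/-- regret bound with fixed learning rate. -/
theorem regret_fixed_rate {d J : ℕ} (hJ : 0 < J) (T : ℕ) (hT : 0 < T)
    (Θ : Set (EuclideanSpace ℝ (Fin d))) (hΘc : IsClosed Θ) (hΘconv : Convex ℝ Θ)
    (hΘ0 : (0 : EuclideanSpace ℝ (Fin d)) ∈ Θ)
    (lam G η : ℝ) (hlam : 0 ≤ lam) (hG : 0 ≤ G) (hη : 0 < η)
    (L : ℕ → EuclideanSpace ℝ (Fin d) → ℝ)
    (hLconv : ∀ t ∈ Finset.Icc 1 T, ConvexOn ℝ Set.univ (L t))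
    (hLlip : ∀ t ∈ Finset.Icc 1 T, ∀ θ₀ ∈ Θ, ∀ g : EuclideanSpace ℝ (Fin d),
      IsSubgradientAt (L t) g θ₀ → ‖g‖ ≤ G)
    (R : Fin J → EuclideanSpace ℝ (Fin d) → EReal)
    (hRconv : ∀ j, ERealConvexOn (R j)) (hRlsc : ∀ j, LowerSemicontinuous (R j))
    (hRprop : ∀ j, ERealProper (R j))
    (hRnonneg : ∀ θ, (0 : EReal) ≤ ∑ j, R j θ)
    (hR0 : (∑ j, R j (0 : EuclideanSpace ℝ (Fin d))) = 0)
    -- condition (ii): each prox operator does not increase the previous `R_{j'}`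
    (hii : ∀ j j' : Fin J, j' < j → ∀ θ θ' : EuclideanSpace ℝ (Fin d),
      IsProxPtOf (η * lam) (R j) θ θ' → R j' θ' ≤ R j' θ)
    -- condition (iii): projecting onto `Θ` does not increase `R`
    (hiii : ∀ θ θ' : EuclideanSpace ℝ (Fin d), IsProjPt Θ θ θ' →
      (∑ j, R j θ') ≤ ∑ j, R j θ)
    -- the iterates of the algorithm
    (θ : ℕ → EuclideanSpace ℝ (Fin d)) (g : ℕ → EuclideanSpace ℝ (Fin d))
    (θtil : ℕ → Fin (J + 1) → EuclideanSpace ℝ (Fin d))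
    (hθ1 : θ 1 = 0)
    (hg : ∀ t ∈ Finset.Icc 1 T, IsSubgradientAt (L t) (g t) (θ t))
    (h0 : ∀ t ∈ Finset.Icc 1 T, θtil t 0 = θ t - η • g t)
    (hsteps : ∀ t ∈ Finset.Icc 1 T, ∀ j : Fin J,
      IsProxPtOf (η * lam) (R j) (θtil t j.castSucc) (θtil t j.succ))
    (hproj : ∀ t ∈ Finset.Icc 1 T, IsProjPt Θ (θtil t (Fin.last J)) (θ (t + 1)))
    -- `θ*` minimizes the batch objective over `Θ`
    (θstar : EuclideanSpace ℝ (Fin d)) (hθstar : θstar ∈ Θ)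
    (hmin : ∀ θ' ∈ Θ,
      (∑ t ∈ Finset.Icc 1 T, ((lam : EReal) * (∑ j, R j θstar) + ((L t θstar : ℝ) : EReal)))
        ≤ ∑ t ∈ Finset.Icc 1 T, ((lam : EReal) * (∑ j, R j θ') + ((L t θ' : ℝ) : EReal))) :
    -- Reg_T ≤ (ηT/2)G² + ‖θ*‖²/(2η)
    (∑ t ∈ Finset.Icc 1 T, ((lam : EReal) * (∑ j, R j (θ t)) + ((L t (θ t) : ℝ) : EReal)))
      ≤ (∑ t ∈ Finset.Icc 1 T, ((lam : EReal) * (∑ j, R j θstar) + ((L t θstar : ℝ) : EReal)))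
        + ((η * T / 2 * G ^ 2 + ‖θstar‖ ^ 2 / (2 * η) : ℝ) : EReal) := by
  classical
  by_cases htop : 0 < lam ∧ (∑ j, R j θstar) = ⊤
  · have hterm : ∀ t ∈ Finset.Icc 1 T,
        ((lam : EReal) * (∑ j, R j θstar) + ((L t θstar : ℝ) : EReal)) = ⊤ := by
      intro t _
      rw [htop.2, EReal.mul_top_of_pos (by exact_mod_cast htop.1),
        EReal.top_add_of_ne_bot (EReal.coe_ne_bot _)]
    have h1m : (1:ℕ) ∈ Finset.Icc 1 T := Finset.mem_Icc.mpr ⟨le_rfl, hT⟩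
    have hsum : (∑ t ∈ Finset.Icc 1 T,
        ((lam : EReal) * (∑ j, R j θstar) + ((L t θstar : ℝ) : EReal))) = ⊤ :=
      er_sum_eq_top _ _ (fun i hi => by rw [hterm i hi]; exact top_ne_bot) h1m (hterm 1 h1m)
    rw [hsum, EReal.top_add_of_ne_bot (EReal.coe_ne_bot _)]
    exact le_top
  have hstarfin : 0 < lam → (∑ j, R j θstar) ≠ ⊤ := fun hl ht => htop ⟨hl, ht⟩
  have hsumnb : ∀ x : EuclideanSpace ℝ (Fin d), (∑ j, R j x) ≠ (⊥:EReal) := fun x =>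
    er_sum_ne_bot _ _ (fun j _ => (hRprop j).2 x)
  have hc : (0:ℝ) ≤ η * lam := mul_nonneg hη.le hlam
  set ρ : ℕ → ℝ := fun t => (∑ j, R j (θ t)).toReal with hρ
  set ρs : ℝ := (∑ j, R j θstar).toReal with hρs
  set A : ℕ → ℝ := fun t => ‖θ t - θstar‖^2 with hA
  have hθΘ : ∀ t, 1 ≤ t → t ≤ T → θ t ∈ Θ := by
    intro t h1 h2
    rcases Nat.exists_eq_add_of_le h1 with ⟨s, rfl⟩
    cases s with
    | zero => simpa [hθ1] using hΘ0
    | succ m =>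
      have hm : 1 + m ∈ Finset.Icc 1 T := Finset.mem_Icc.mpr ⟨by omega, by omega⟩
      have hmem := (hproj (1+m) hm).1
      have e : 1 + (m+1) = (1+m) + 1 := by omega
      rw [e]; exact hmem
  have hzj : ∀ j : Fin J, η * lam = 0 ∨ R j θstar ≠ ⊤ := by
    intro j
    rcases hlam.eq_or_lt with h | h
    · left; rw [← h, mul_zero]
    · right
      exact er_term_ne_top Finset.univ (fun j => R j θstar)
        (fun j _ => (hRprop j).2 θstar) (hstarfin h) j (Finset.mem_univ j)
  have chainII : ∀ t ∈ Finset.Icc 1 T, ∀ j' : Fin J,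
      R j' (θtil t (Fin.last J)) ≤ R j' (θtil t j'.succ) := by
    intro t ht j'
    have key : ∀ k : ℕ, ∀ hk : k ≤ J, j'.val + 1 ≤ k →
        R j' (θtil t ⟨k, Nat.lt_succ_of_le hk⟩) ≤ R j' (θtil t j'.succ) := by
      intro k
      induction k with
      | zero => intro _ h; omega
      | succ m ih =>
        intro hk hj
        rcases Nat.lt_or_ge j'.val m with hlt | hge
        · have hmJ : m < J := hk
          have hstep := hii ⟨m, hmJ⟩ j' (Fin.lt_def.mpr hlt) _ _ (hsteps t ht ⟨m, hmJ⟩)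
          have e1 : ((⟨m,hmJ⟩ : Fin J).succ : Fin (J+1)) = ⟨m+1, Nat.lt_succ_of_le hk⟩ := rfl
          have e2 : ((⟨m,hmJ⟩ : Fin J).castSucc : Fin (J+1))
              = ⟨m, Nat.lt_succ_of_le (le_of_lt hmJ)⟩ := rfl
          rw [e1, e2] at hstep
          exact hstep.trans (ih (le_of_lt hmJ) (by omega))
        · have hjm : j'.val = m := by omega
          have e : (j'.succ : Fin (J+1)) = ⟨m+1, Nat.lt_succ_of_le hk⟩ := by
            ext; simp [Fin.val_succ, hjm]
          rw [← e]
    exact key J le_rfl j'.isLt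
  have step : ∀ t, 1 ≤ t → t ≤ T →
      (2*η*(lam * ρ (t+1) + L t (θ t) - (lam * ρs + L t θstar)) ≤ η^2*G^2 + A t - A (t+1))
      ∧ (0 < lam → (∑ j, R j (θ (t+1))) ≠ ⊤) := by
    intro t h1 h2
    have htm : t ∈ Finset.Icc 1 T := Finset.mem_Icc.mpr ⟨h1, h2⟩
    set rr : Fin J → ℝ := fun j => (R j (θtil t j.succ)).toReal with hrr
    set rs : Fin J → ℝ := fun j => (R j θstar).toReal with hrs
    have hcontr : ∀ j : Fin J, ‖θtil t j.succ - θstar‖^2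
        ≤ ‖θtil t j.castSucc - θstar‖^2 + 2*((η*lam)*(rs j - rr j)) :=
      fun j => prox_contract (η*lam) hc (R j) (hRconv j) (hRprop j) _ _ _
        (hsteps t htm j) (hzj j)
    have hchain : ‖θtil t (Fin.last J) - θstar‖^2
        ≤ ‖θtil t 0 - θstar‖^2 + ∑ j : Fin J, 2*((η*lam)*(rs j - rr j)) :=
      fin_chain J (fun i => ‖θtil t i - θstar‖^2) _ hcontr
    have hsum2 : ∑ j : Fin J, 2*((η*lam)*(rs j - rr j))
        = 2*(η*lam)*((∑ j, rs j) - (∑ j, rr j)) := by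
      rw [← Finset.sum_sub_distrib, Finset.mul_sum]
      exact Finset.sum_congr rfl fun j _ => by ring
    have hprojc : A (t+1) ≤ ‖θtil t (Fin.last J) - θstar‖^2 :=
      proj_contract Θ hΘconv _ _ _ (hproj t htm) hθstar
    have hY0 : θtil t 0 = θ t - η • g t := h0 t htm
    have hgradexp : ‖θtil t 0 - θstar‖^2
        = A t - 2*(η*⟪g t, θ t - θstar⟫) + η^2*‖g t‖^2 := by
      simp only [hA]
      rw [hY0, show θ t - η • g t - θstar = (θ t - θstar) - η • g t from by abel,
        grad_expand, real_inner_comm]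
    have hsub : L t (θ t) - L t θstar ≤ ⟪g t, θ t - θstar⟫ := by
      have h := hg t htm θstar
      have e : ⟪g t, θstar - θ t⟫ = -⟪g t, θ t - θstar⟫ := by
        rw [show θstar - θ t = -(θ t - θstar) from by abel, inner_neg_right]
      rw [e] at h
      linarith
    have hgG : ‖g t‖ ≤ G := hLlip t htm (θ t) (hθΘ t h1 h2) (g t) (hg t htm)
    have hg2 : ‖g t‖^2 ≤ G^2 := by nlinarith [norm_nonneg (g t)]
    have hnt : 0 < lam → (∑ j, R j (θ (t+1))) ≠ ⊤ ∧ ρ (t+1) ≤ ∑ j, rr j := by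
      intro hlpos
      have hcpos : 0 < η * lam := mul_pos hη hlpos
      have hfin_rr : ∀ j : Fin J, R j (θtil t j.succ) = ((rr j : ℝ) : EReal) := fun j =>
        (EReal.coe_toReal (prox_ne_top (η*lam) hcpos (R j) (hRprop j) _ _ (hsteps t htm j))
          ((hRprop j).2 _)).symm
      have hA1 : (∑ j, R j (θ (t+1))) ≤ ∑ j, R j (θtil t (Fin.last J)) :=
        hiii _ _ (hproj t htm)
      have hA2 : (∑ j, R j (θtil t (Fin.last J))) ≤ (((∑ j, rr j : ℝ)) : EReal) := by
        rw [er_coe_sum]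
        exact Finset.sum_le_sum fun j _ => (chainII t htm j).trans_eq (hfin_rr j)
      have hle := hA1.trans hA2
      refine ⟨(lt_of_le_of_lt hle (EReal.coe_lt_top _)).ne, ?_⟩
      have h3 := EReal.toReal_le_toReal hle (hsumnb _) (EReal.coe_ne_top _)
      simpa using h3
    have hlamrr : lam * ρ (t+1) ≤ lam * ∑ j, rr j := by
      rcases hlam.eq_or_lt with h | h
      · rw [← h]; simp
      · exact mul_le_mul_of_nonneg_left (hnt h).2 hlam
    have hlamrs : lam * ρs = lam * ∑ j, rs j := by
      rcases hlam.eq_or_lt with h | h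
      · rw [← h]; simp
      · congr 1
        have hcpos : 0 < η * lam := mul_pos hη h
        have hfin : ∀ j : Fin J, R j θstar = ((rs j : ℝ) : EReal) := by
          intro j
          rcases hzj j with h0 | hj
          · exact absurd h0 (ne_of_gt hcpos)
          · exact (EReal.coe_toReal hj ((hRprop j).2 _)).symm
        rw [hρs, Finset.sum_congr rfl (fun j _ => hfin j), ← er_coe_sum, EReal.toReal_coe]
    refine ⟨?_, fun h => (hnt h).1⟩
    have H6 : 2*(η*lam)*((∑ j, rs j) - (∑ j, rr j))
        = 2*η*(lam*(∑ j, rs j)) - 2*η*(lam*(∑ j, rr j)) := by ring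
    have Hrs : 2*η*(lam*ρs) = 2*η*(lam*(∑ j, rs j)) := by rw [hlamrs]
    linarith [mul_le_mul_of_nonneg_left hlamrr (by linarith : (0:ℝ) ≤ 2*η),
      mul_le_mul_of_nonneg_left hsub (by linarith : (0:ℝ) ≤ 2*η),
      mul_le_mul_of_nonneg_left hg2 (sq_nonneg η), hchain, hprojc, hgradexp, hsum2, H6, Hrs]
  have ha1 : lam * ρ 1 = 0 := by
    have h1 : ρ 1 = 0 := by
      simp only [hρ]
      rw [hθ1, hR0]
      rfl
    rw [h1, mul_zero]
  have hann : ∀ t, 1 ≤ t → t ≤ T → 0 ≤ lam * ρ (t+1) := fun t _ _ =>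
    mul_nonneg hlam (er_toReal_nonneg _ (hRnonneg _))
  have hAnn : ∀ t, 0 ≤ A t := fun t => by simp only [hA]; positivity
  have hkey := sum_step T hT η (G^2) hη (fun t => lam * ρ t) (fun t => L t (θ t))
      (fun t => lam * ρs + L t θstar) A ha1 hann hAnn (fun t h1 h2 => (step t h1 h2).1)
  have hA1 : A 1 = ‖θstar‖^2 := by
    simp only [hA]
    rw [hθ1, zero_sub, norm_neg]
  rw [hA1] at hkey
  have hconvT : ∀ t ∈ Finset.Icc 1 T,
      (lam : EReal) * (∑ j, R j (θ t)) = ((lam * ρ t : ℝ) : EReal) := by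
    intro t ht
    rcases hlam.eq_or_lt with h | h
    · rw [← h]; simp
    · have hnt : (∑ j, R j (θ t)) ≠ ⊤ := by
        obtain ⟨ht1, ht2⟩ := Finset.mem_Icc.mp ht
        rcases Nat.exists_eq_add_of_le ht1 with ⟨s, rfl⟩
        cases s with
        | zero => rw [hθ1, hR0]; exact EReal.zero_ne_top
        | succ m =>
          have e : 1 + (m+1) = (1+m)+1 := by omega
          rw [e]
          exact (step (1+m) (by omega) (by omega)).2 h
      rw [← EReal.coe_toReal hnt (hsumnb _), ← EReal.coe_mul]
  have hconvS : (lam : EReal) * (∑ j, R j θstar) = ((lam * ρs : ℝ) : EReal) := by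
    rcases hlam.eq_or_lt with h | h
    · rw [← h]; simp
    · rw [← EReal.coe_toReal (hstarfin h) (hsumnb _), ← EReal.coe_mul]
  calc (∑ t ∈ Finset.Icc 1 T, ((lam : EReal) * (∑ j, R j (θ t)) + ((L t (θ t) : ℝ) : EReal)))
      = ((∑ t ∈ Finset.Icc 1 T, (lam * ρ t + L t (θ t)) : ℝ) : EReal) := by
        rw [er_coe_sum]
        exact Finset.sum_congr rfl fun t ht => by rw [hconvT t ht, ← EReal.coe_add]
    _ ≤ ((((∑ t ∈ Finset.Icc 1 T, (lam * ρs + L t θstar))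
          + (η*T/2*G^2 + ‖θstar‖^2/(2*η)) : ℝ)) : EReal) := by
        exact_mod_cast hkey
    _ = (∑ t ∈ Finset.Icc 1 T, ((lam : EReal) * (∑ j, R j θstar) + ((L t θstar : ℝ) : EReal)))
        + ((η * T / 2 * G ^ 2 + ‖θstar‖ ^ 2 / (2 * η) : ℝ) : EReal) := by
        rw [EReal.coe_add, er_coe_sum]
        congr 1
        exact Finset.sum_congr rfl fun t ht => by rw [hconvS, ← EReal.coe_add]
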